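/- arXiv:2208.02913 — 2 statements merged into one kernel-verified Lean document; each statement's English description precedes it below -/
import Mathlib

section
/- Let U be a finite multiset of unit vectors in R^n, let 1 ≤ k ≤ n, and let 0 ≤ ρ ≤ 1. Then at least one of the following holds: (A) the number of k-tuples (u_1,...,u_k) ∈ U^k with |u_1 ∧ ... ∧ u_k| ≥ ρ^{k-1} is at least (1/2)(#U)^k; or (B) there is a (k-1)-dimensional linear subspace H ⊂ R^n such that #{u ∈ U : |H ∧ u| ≤ ρ} ≥ 2^{-2k}(#U). -/
open Finset
open scoped Classical

open Module
open InnerProductSpace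
open scoped RealInnerProductSpace

instance (k : ℕ) : WellFoundedLT (Fin k) := inferInstance

/-- The unsigned `k`-dimensional volume of the parallelepiped spanned by
`w 0, …, w (k-1)` in `ℝⁿ`: the square root of the Gram determinant. -/
noncomputable def gramVol {n k : ℕ} (w : Fin k → EuclideanSpace ℝ (Fin n)) : ℝ :=
  Real.sqrt (Matrix.det (Matrix.of fun i j : Fin k => (inner ℝ (w i) (w j) : ℝ)))

lemma gramVol_eq_prod {n k : ℕ} (w : Fin k → EuclideanSpace ℝ (Fin n)) :
    gramVol w = ∏ i, ‖gramSchmidt ℝ w i‖ := by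
  set g : Fin k → EuclideanSpace ℝ (Fin n) := gramSchmidt ℝ w with hg
  set c : Matrix (Fin k) (Fin k) ℝ :=
    Matrix.of (fun i j : Fin k => if i = j then (1:ℝ) else if i < j then ⟪g i, w j⟫ / ‖g i‖ ^ 2 else 0) with hc
  have hw : ∀ j, w j = ∑ i, c i j • g i := by
    intro j
    have h1 : ∑ i, c i j • g i = ∑ i ∈ insert j (Finset.Iio j), c i j • g i := by
      refine (Finset.sum_subset (Finset.subset_univ _) ?_).symm
      intro x _ hx
      simp only [Finset.mem_insert, Finset.mem_Iio] at hx
      push_neg at hx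
      simp [hc, hx.1, hx.2]
    rw [h1, Finset.sum_insert (by simp)]
    have h2 : ∀ i ∈ Finset.Iio j, c i j • g i = (⟪g i, w j⟫ / ‖g i‖ ^ 2) • g i := by
      intro i hi
      have hij : i < j := Finset.mem_Iio.mp hi
      simp [hc, hij, hij.ne]
    rw [Finset.sum_congr rfl h2]
    have h3 : c j j • g j = g j := by simp [hc]
    rw [h3]
    exact gramSchmidt_def'' ℝ w j
  have hinner : ∀ i j : Fin k, ⟪g i, g j⟫ = if i = j then ‖g i‖ ^ 2 else 0 := by
    intro i j
    by_cases h : i = j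
    · subst h; rw [if_pos rfl, real_inner_self_eq_norm_sq]
    · rw [if_neg h]; exact gramSchmidt_orthogonal ℝ w h
  have hGram : (Matrix.of fun i j : Fin k => (inner ℝ (w i) (w j) : ℝ)) =
      c.transpose * Matrix.diagonal (fun i => ‖g i‖ ^ 2) * c := by
    ext m p
    rw [Matrix.mul_apply]
    simp only [Matrix.mul_diagonal, Matrix.transpose_apply, Matrix.of_apply]
    rw [hw m, hw p, sum_inner]
    refine Finset.sum_congr rfl fun i _ => ?_
    rw [inner_sum]
    simp only [real_inner_smul_left, real_inner_smul_right, hinner]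
    rw [Finset.sum_eq_single i (fun b _ hb => by rw [if_neg (fun h => hb h.symm)]; ring)
      (fun h => absurd (Finset.mem_univ i) h)]
    simp; ring
  have hcdet : c.det = 1 := by
    rw [Matrix.det_of_upperTriangular]
    · apply Finset.prod_eq_one; intro i _; simp [hc]
    · intro i j hij
      simp only [id] at hij
      simp [hc, hij.ne', lt_asymm hij]
  have hdet : (Matrix.of fun i j : Fin k => (inner ℝ (w i) (w j) : ℝ)).det = ∏ i, ‖g i‖ ^ 2 := by
    rw [hGram, Matrix.det_mul, Matrix.det_mul, Matrix.det_transpose, hcdet,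
      Matrix.det_diagonal]
    ring
  rw [gramVol, hdet, Finset.prod_pow, Real.sqrt_sq (by positivity)]

lemma inner_gramSchmidt_self {n k : ℕ} (w : Fin k → EuclideanSpace ℝ (Fin n)) (i : Fin k) :
    ⟪gramSchmidt ℝ w i, w i⟫ = ‖gramSchmidt ℝ w i‖ ^ 2 := by
  conv_lhs => rw [gramSchmidt_def'' ℝ w i]
  rw [inner_add_right, inner_sum, real_inner_self_eq_norm_sq]
  simp only [real_inner_smul_right]
  rw [Finset.sum_eq_zero, add_zero]
  intro l hl
  rw [gramSchmidt_orthogonal ℝ w (Finset.mem_Iio.mp hl).ne', mul_zero]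

lemma norm_gramSchmidt_le {n k : ℕ} (w : Fin k → EuclideanSpace ℝ (Fin n)) (i : Fin k) :
    ‖gramSchmidt ℝ w i‖ ≤ ‖w i‖ := by
  rcases eq_or_lt_of_le (norm_nonneg (gramSchmidt ℝ w i)) with h | h
  · rw [← h]; exact norm_nonneg _
  · have h2 := inner_gramSchmidt_self w i
    have h3 := real_inner_le_norm (gramSchmidt ℝ w i) (w i)
    rw [h2] at h3
    nlinarith

lemma gramSchmidt_diff_mem_span {n k : ℕ} (w : Fin k → EuclideanSpace ℝ (Fin n)) (i : Fin k) :
    w i - gramSchmidt ℝ w i ∈ Submodule.span ℝ (w '' Set.Iio i) := by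
  have h := gramSchmidt_def'' ℝ w i
  have h2 : w i - gramSchmidt ℝ w i
      = ∑ l ∈ Finset.Iio i, (⟪gramSchmidt ℝ w l, w i⟫ / (‖gramSchmidt ℝ w l‖ : ℝ) ^ 2) • gramSchmidt ℝ w l := by
    rw [sub_eq_iff_eq_add']; exact h
  rw [h2, ← span_gramSchmidt_Iio ℝ w i]
  refine Submodule.sum_mem _ fun l hl => Submodule.smul_mem _ _ (Submodule.subset_span ?_)
  exact ⟨l, Finset.mem_Iio.mp hl, rfl⟩

lemma gramSchmidt_fin_zero {n k : ℕ} (w : Fin k → EuclideanSpace ℝ (Fin n)) (i : Fin k)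
    (hi : (i : ℕ) = 0) : gramSchmidt ℝ w i = w i := by
  rw [gramSchmidt_def]
  rw [show Finset.Iio i = ∅ from ?_]
  · simp
  · ext x
    simp only [Finset.mem_Iio, Finset.notMem_empty, iff_false]
    intro hx
    have := Fin.lt_def.mp hx
    omega

lemma gramSchmidt_snoc_castSucc {n d : ℕ} {v : Fin d → EuclideanSpace ℝ (Fin n)}
    (hv : Orthonormal ℝ v) (x : EuclideanSpace ℝ (Fin n)) (j : Fin d) :
    gramSchmidt ℝ (Fin.snoc v x) (Fin.castSucc j) = v j := by
  suffices H : ∀ m : ℕ, ∀ j : Fin d, (j : ℕ) = m →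
      gramSchmidt ℝ (Fin.snoc v x) (Fin.castSucc j) = v j from H j j rfl
  intro m
  induction m using Nat.strong_induction_on with
  | _ m ih =>
    intro j hj
    rw [gramSchmidt_def, Fin.snoc_castSucc, Finset.sum_eq_zero, sub_zero]
    intro l hl
    have hl' : (l : ℕ) < (j : ℕ) := by
      have := Fin.lt_def.mp (Finset.mem_Iio.mp hl); simpa using this
    have hld : (l : ℕ) < d := lt_trans hl' j.isLt
    have hleq : l = Fin.castSucc (⟨l, hld⟩ : Fin d) := by ext; simp
    rw [hleq, ih l (hj ▸ hl') ⟨l, hld⟩ rfl, Submodule.starProjection_singleton]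
    rw [hv.2 (show (⟨l, hld⟩ : Fin d) ≠ j from fun h => by
      rw [← h] at hl'; simp at hl')]
    simp

lemma gramVol_snoc_le {n d : ℕ} {v : Fin d → EuclideanSpace ℝ (Fin n)} (hv : Orthonormal ℝ v)
    (x q : EuclideanSpace ℝ (Fin n)) (hq : q ∈ Submodule.span ℝ (Set.range v)) :
    gramVol (Fin.snoc v x) ≤ ‖x - q‖ := by
  set w : Fin (d + 1) → EuclideanSpace ℝ (Fin n) := Fin.snoc v x with hw
  have hpre : ∀ j : Fin d, gramSchmidt ℝ w (Fin.castSucc j) = v j :=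
    gramSchmidt_snoc_castSucc hv x
  set G := gramSchmidt ℝ w (Fin.last d) with hG
  have hvol : gramVol w = ‖G‖ := by
    rw [gramVol_eq_prod, Fin.prod_univ_castSucc, Finset.prod_eq_one, one_mul]
    intro j _
    rw [hpre j]
    exact hv.1 j
  have hGv : ∀ y ∈ Submodule.span ℝ (Set.range v), ⟪G, y⟫ = 0 := by
    intro y hy
    have hker : Submodule.span ℝ (Set.range v) ≤ LinearMap.ker (innerₛₗ ℝ G) := by
      rw [Submodule.span_le]
      rintro _ ⟨j, rfl⟩
      simp only [SetLike.mem_coe, LinearMap.mem_ker, coe_innerₛₗ_apply]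
      rw [← hpre j]
      exact gramSchmidt_orthogonal ℝ w (Fin.castSucc_lt_last j).ne'
    simpa using hker hy
  have hxG : x - G ∈ Submodule.span ℝ (Set.range v) := by
    have h := gramSchmidt_diff_mem_span w (Fin.last d)
    rw [show w (Fin.last d) = x from Fin.snoc_last _ _] at h
    refine Submodule.span_le.mpr ?_ h
    rintro _ ⟨l, hl, rfl⟩
    have hld : (l : ℕ) < d := by simpa [Fin.lt_def] using hl
    have : w l = v ⟨l, hld⟩ := by
      have h2 : l = Fin.castSucc (⟨l, hld⟩ : Fin d) := by ext; simp
      rw [hw]; conv_lhs => rw [h2, Fin.snoc_castSucc]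
    rw [this]
    exact Submodule.subset_span ⟨_, rfl⟩
  have hGperp : ⟪G, (x - G) - q⟫ = 0 := hGv _ (Submodule.sub_mem _ hxG hq)
  have hxq : x - q = G + ((x - G) - q) := by abel
  have hsq : ‖x - q‖ ^ 2 = ‖G‖ ^ 2 + 2 * ⟪G, (x - G) - q⟫ + ‖(x - G) - q‖ ^ 2 := by
    rw [hxq]; exact norm_add_sq_real _ _
  rw [hvol]
  nlinarith [norm_nonneg (x - q), norm_nonneg G, norm_nonneg ((x - G) - q)]

lemma exists_orthonormal_superset {n d : ℕ} (hdn : d ≤ n)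
    (V : Submodule ℝ (EuclideanSpace ℝ (Fin n))) (hV : finrank ℝ V ≤ d) :
    ∃ v : Fin d → EuclideanSpace ℝ (Fin n), Orthonormal ℝ v ∧
      V ≤ Submodule.span ℝ (Set.range v) := by
  set d' := finrank ℝ V with hd'
  let b := stdOrthonormalBasis ℝ V
  set vfull : Fin n → EuclideanSpace ℝ (Fin n) :=
    fun j => if h : (j : ℕ) < d' then (b ⟨j, h⟩ : EuclideanSpace ℝ (Fin n)) else 0 with hvfull
  set s : Set (Fin n) := {j | (j : ℕ) < d'} with hs
  have hres : Orthonormal ℝ (s.restrict vfull) := by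
    rw [orthonormal_iff_ite]
    rintro ⟨i, hi⟩ ⟨j, hj⟩
    have hi' : (i : ℕ) < d' := hi
    have hj' : (j : ℕ) < d' := hj
    simp only [Set.restrict, Set.restrict_apply, hvfull, dif_pos hi', dif_pos hj']
    rw [← Submodule.coe_inner]
    rw [orthonormal_iff_ite.mp b.orthonormal]
    congr 1
    simp only [eq_iff_iff, Fin.mk.injEq, Subtype.mk.injEq, Fin.ext_iff]
  have hcard : finrank ℝ (EuclideanSpace ℝ (Fin n)) = Fintype.card (Fin n) := by
    simp [finrank_euclideanSpace_fin]
  obtain ⟨B, hB⟩ := hres.exists_orthonormalBasis_extension_of_card_eq hcard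
  refine ⟨fun t => B (Fin.castLE hdn t), B.orthonormal.comp _ (Fin.castLE_injective hdn), ?_⟩
  have hVspan : V ≤ Submodule.span ℝ (Set.range fun j : Fin d' => (b j : EuclideanSpace ℝ (Fin n))) := by
    intro y hy
    have : (⟨y, hy⟩ : V) ∈ Submodule.span ℝ (Set.range b.toBasis) := by
      rw [b.toBasis.span_eq]; trivial
    have h2 := Submodule.mem_map_of_mem (f := V.subtype) this
    rw [← Submodule.span_image] at h2
    convert h2 using 2
    · rw [b.coe_toBasis, ← Set.range_comp]; rfl
    · rfl
  refine le_trans hVspan (Submodule.span_le.mpr ?_)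
  rintro _ ⟨j, rfl⟩
  have hjd : (j : ℕ) < d := lt_of_lt_of_le j.isLt hV
  have hjn : (j : ℕ) < n := lt_of_lt_of_le hjd hdn
  show (b j : EuclideanSpace ℝ (Fin n)) ∈ _
  have h1 : (b j : EuclideanSpace ℝ (Fin n)) = vfull ⟨j, hjn⟩ := by
    simp only [hvfull]
    rw [dif_pos (show ((⟨(j : ℕ), hjn⟩ : Fin n) : ℕ) < d' from j.isLt)]
  rw [h1, ← hB _ (show ((⟨(j : ℕ), hjn⟩ : Fin n) ∈ s) from j.isLt)]
  exact Submodule.subset_span ⟨⟨j, hjd⟩, rfl⟩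

theorem stmt_0 {n k N : ℕ} (hk : 1 ≤ k) (hkn : k ≤ n) {ρ : ℝ} (hρ0 : 0 ≤ ρ) (hρ1 : ρ ≤ 1)
    (u : Fin N → EuclideanSpace ℝ (Fin n)) (hu : ∀ i, ‖u i‖ = 1) :
    ((1 : ℝ) / 2) * (N : ℝ) ^ k ≤
      ((Finset.univ.filter fun f : Fin k → Fin N =>
          ρ ^ (k - 1) ≤ gramVol (u ∘ f)).card : ℝ) ∨
    ∃ v : Fin (k - 1) → EuclideanSpace ℝ (Fin n), Orthonormal ℝ v ∧
      (2 : ℝ) ^ (-(2 * k : ℤ)) * (N : ℝ) ≤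
        ((Finset.univ.filter fun i : Fin N =>
            gramVol (Fin.snoc v (u i)) ≤ ρ).card : ℝ) := by
  by_cases hA : ((1 : ℝ) / 2) * (N : ℝ) ^ k ≤
      ((Finset.univ.filter fun f : Fin k → Fin N =>
          ρ ^ (k - 1) ≤ gramVol (u ∘ f)).card : ℝ)
  · exact Or.inl hA
  right
  push_neg at hA
  -- N is positive
  have hN : 0 < N := by
    rcases Nat.eq_zero_or_pos N with h | h
    · exfalso
      subst h
      rw [Nat.cast_zero, zero_pow (by omega : k ≠ 0), mul_zero] at hA
      exact absurd hA (not_lt.mpr (Nat.cast_nonneg _))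
    · exact h
  -- k = 1 is impossible (branch A would hold)
  rcases eq_or_lt_of_le hk with hk1 | hk2
  · exfalso
    have hall : ∀ f : Fin k → Fin N, ρ ^ (k - 1) ≤ gramVol (u ∘ f) := by
      intro f
      have hk0 : k - 1 = 0 := by omega
      rw [hk0, pow_zero, gramVol_eq_prod]
      have : ∀ i : Fin k, ‖gramSchmidt ℝ (u ∘ f) i‖ = 1 := by
        intro i
        have hi0 : (i : ℕ) = 0 := by omega
        rw [gramSchmidt_fin_zero _ _ hi0]
        exact hu (f i)
      rw [Finset.prod_congr rfl fun i _ => this i, Finset.prod_const_one]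
    rw [Finset.filter_true_of_mem fun f _ => hall f, Finset.card_univ, Fintype.card_fun,
      Fintype.card_fin, Fintype.card_fin] at hA
    push_cast at hA
    nlinarith [pow_pos (show (0:ℝ) < N by exact_mod_cast hN) k,
      pow_le_pow_left₀ (show (0:ℝ) ≤ 1 by norm_num) (show (1:ℝ) ≤ N by exact_mod_cast hN) k]
  -- main case : 2 ≤ k
  set bad := Finset.univ.filter (fun f : Fin k → Fin N => gramVol (u ∘ f) < ρ ^ (k - 1)) with hbaddef
  have hcardsplit : (Finset.univ.filter fun f : Fin k → Fin N =>
      ρ ^ (k - 1) ≤ gramVol (u ∘ f)).card + bad.card = N ^ k := by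
    rw [hbaddef]
    have h1 := Finset.card_filter_add_card_filter_not
      (s := (Finset.univ : Finset (Fin k → Fin N)))
      (p := fun f => ρ ^ (k - 1) ≤ gramVol (u ∘ f))
    rw [Finset.card_univ, Fintype.card_fun, Fintype.card_fin, Fintype.card_fin] at h1
    rw [← h1]
    have : (Finset.univ.filter (fun f : Fin k → Fin N => gramVol (u ∘ f) < ρ ^ (k - 1)))
        = Finset.univ.filter (fun f => ¬ ρ ^ (k - 1) ≤ gramVol (u ∘ f)) := by
      ext f; simp [not_le]
    rw [this]
  have hbad : ((N : ℝ)) ^ k / 2 < (bad.card : ℝ) := by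
    have h2 : ((Finset.univ.filter fun f : Fin k → Fin N =>
        ρ ^ (k - 1) ≤ gramVol (u ∘ f)).card : ℝ) + (bad.card : ℝ) = (N : ℝ) ^ k := by
      exact_mod_cast congrArg (Nat.cast : ℕ → ℝ) hcardsplit
    linarith
  set i₀ : Fin k := ⟨0, by omega⟩ with hi₀
  set S : Fin k → Finset (Fin k → Fin N) :=
    fun i => Finset.univ.filter (fun f => ‖gramSchmidt ℝ (u ∘ f) i‖ < ρ) with hSdef
  have hcover : bad ⊆ (Finset.univ.erase i₀).biUnion S := by
    intro f hf
    have hlt : gramVol (u ∘ f) < ρ ^ (k - 1) := (Finset.mem_filter.mp hf).2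
    rw [Finset.mem_biUnion]
    by_contra hnot
    push_neg at hnot
    have hge : ∀ i ∈ Finset.univ.erase i₀, ρ ≤ ‖gramSchmidt ℝ (u ∘ f) i‖ := by
      intro i hi
      by_contra hc
      exact hnot i hi (Finset.mem_filter.mpr ⟨Finset.mem_univ _, not_le.mp hc⟩)
    have h0 : ‖gramSchmidt ℝ (u ∘ f) i₀‖ = 1 := by
      rw [gramSchmidt_fin_zero _ _ rfl]
      exact hu (f i₀)
    have hA2 : ρ ^ (k - 1) ≤ gramVol (u ∘ f) := by
      rw [gramVol_eq_prod, ← Finset.mul_prod_erase Finset.univ _ (Finset.mem_univ i₀), h0,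
        one_mul]
      calc ρ ^ (k - 1) = ∏ _i ∈ Finset.univ.erase i₀, ρ := by
            rw [Finset.prod_const, Finset.card_erase_of_mem (Finset.mem_univ _),
              Finset.card_univ, Fintype.card_fin]
        _ ≤ ∏ i ∈ Finset.univ.erase i₀, ‖gramSchmidt ℝ (u ∘ f) i‖ :=
            Finset.prod_le_prod (fun _ _ => hρ0) hge
    exact absurd hlt (not_lt.mpr hA2)
  have hsum : (bad.card : ℝ) ≤ ∑ i ∈ Finset.univ.erase i₀, ((S i).card : ℝ) := by
    have h1 : bad.card ≤ ((Finset.univ.erase i₀).biUnion S).card := Finset.card_le_card hcover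
    have h2 := Finset.card_biUnion_le (s := Finset.univ.erase i₀) (t := S)
    push_cast
    exact_mod_cast le_trans h1 h2
  have hK1 : ((k - 1 : ℕ) : ℝ) ≠ 0 := Nat.cast_ne_zero.mpr (by omega)
  have hK1' : (0:ℝ) < ((k - 1 : ℕ) : ℝ) := by
    have : 0 < k - 1 := by omega
    exact_mod_cast this
  obtain ⟨i, himem, hSi⟩ : ∃ i ∈ Finset.univ.erase i₀,
      (N : ℝ) ^ k / (2 * ((k - 1 : ℕ) : ℝ)) < ((S i).card : ℝ) := by
    apply Finset.exists_lt_of_sum_lt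
    rw [Finset.sum_const, Finset.card_erase_of_mem (Finset.mem_univ _), Finset.card_univ,
      Fintype.card_fin, nsmul_eq_mul]
    calc ((k - 1 : ℕ) : ℝ) * ((N : ℝ) ^ k / (2 * ((k - 1 : ℕ) : ℝ))) = (N : ℝ) ^ k / 2 := by
          have hKc : ((k - 1 : ℕ) : ℝ) = (k : ℝ) - 1 := by
            rw [Nat.cast_sub hk, Nat.cast_one]
          have hne : (k : ℝ) - 1 ≠ 0 := by
            have : (2 : ℝ) ≤ (k : ℝ) := by exact_mod_cast hk2
            intro hcon; linarith [sub_eq_zero.mp hcon]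
          rw [hKc]
          field_simp
      _ < (bad.card : ℝ) := hbad
      _ ≤ _ := hsum
  -- averaging over the choice of the i-th coordinate
  classical
  set count : (Fin k → Fin N) → ℕ :=
    fun f₀ => (Finset.univ.filter fun m : Fin N => Function.update f₀ i m ∈ S i).card
    with hcountdef
  have key : ∑ f₀ : Fin k → Fin N, count f₀ = N * (S i).card := by
    have h1 : ∀ f₀ : Fin k → Fin N,
        count f₀ = ∑ m : Fin N, if Function.update f₀ i m ∈ S i then 1 else 0 := by
      intro f₀
      exact Finset.card_filter _ _
    rw [Finset.sum_congr rfl fun f₀ _ => h1 f₀]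
    have hLI : ∀ p : (Fin k → Fin N) × Fin N,
        (Function.update (Function.update p.1 i p.2) i (p.1 i),
          (Function.update p.1 i p.2) i) = p := by
      intro p
      rw [Function.update_idem, Function.update_self, Function.update_eq_self]
    set e : ((Fin k → Fin N) × Fin N) ≃ ((Fin k → Fin N) × Fin N) :=
      ⟨fun p => (Function.update p.1 i p.2, p.1 i),
        fun p => (Function.update p.1 i p.2, p.1 i), hLI, hLI⟩ with hedef
    have h3 := Equiv.sum_comp e
      (fun p : (Fin k → Fin N) × Fin N => if p.1 ∈ S i then (1:ℕ) else 0)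
    rw [hedef] at h3
    simp only [Equiv.coe_fn_mk] at h3
    calc ∑ f₀ : Fin k → Fin N, ∑ m : Fin N, (if Function.update f₀ i m ∈ S i then (1:ℕ) else 0)
        = ∑ p : (Fin k → Fin N) × Fin N,
            (if Function.update p.1 i p.2 ∈ S i then (1:ℕ) else 0) :=
          (Fintype.sum_prod_type'
            (f := fun f₀ m => if Function.update f₀ i m ∈ S i then (1:ℕ) else 0)).symm
      _ = ∑ p : (Fin k → Fin N) × Fin N, (if p.1 ∈ S i then (1:ℕ) else 0) := h3
      _ = ∑ f₀ : Fin k → Fin N, ∑ _m : Fin N, (if f₀ ∈ S i then (1:ℕ) else 0) :=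
          Fintype.sum_prod_type' (f := fun f₀ _m => if f₀ ∈ S i then (1:ℕ) else 0)
      _ = ∑ f₀ : Fin k → Fin N, N * (if f₀ ∈ S i then (1:ℕ) else 0) := by
          refine Finset.sum_congr rfl fun f₀ _ => ?_
          rw [Finset.sum_const, Finset.card_univ, Fintype.card_fin, smul_eq_mul]
      _ = N * ∑ f₀ : Fin k → Fin N, (if f₀ ∈ S i then (1:ℕ) else 0) := by
          rw [Finset.mul_sum]
      _ = N * (S i).card := by
          rw [← Finset.card_filter, Finset.filter_univ_mem]
  have hne' : Nonempty (Fin k → Fin N) := ⟨fun _ => ⟨0, hN⟩⟩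
  obtain ⟨f₀, _, hf₀⟩ : ∃ f₀ ∈ (Finset.univ : Finset (Fin k → Fin N)),
      ((S i).card : ℝ) / (N : ℝ) ^ (k - 1) ≤ (count f₀ : ℝ) := by
    apply Finset.exists_le_of_sum_le Finset.univ_nonempty
    rw [Finset.sum_const, Finset.card_univ, Fintype.card_fun, Fintype.card_fin,
      Fintype.card_fin, nsmul_eq_mul]
    have hkey : ∑ f₀ : Fin k → Fin N, (count f₀ : ℝ) = (N : ℝ) * ((S i).card : ℝ) := by
      exact_mod_cast congrArg (Nat.cast : ℕ → ℝ) key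
    rw [hkey]
    have hNpow : ((N ^ k : ℕ) : ℝ) = (N : ℝ) ^ (k - 1) * (N : ℝ) := by
      push_cast
      rw [← pow_succ]
      congr 1
      omega
    rw [hNpow]
    have hNpos : (0:ℝ) < (N : ℝ) ^ (k - 1) := by positivity
    refine le_of_eq ?_
    field_simp
  -- construct the orthonormal family
  have hk1n : k - 1 ≤ n := by omega
  set y : Fin (k - 1) → EuclideanSpace ℝ (Fin n) :=
    fun t => if h : (t : ℕ) < (i : ℕ) then u (f₀ (⟨t, lt_trans h i.isLt⟩ : Fin k)) else 0
    with hydef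
  obtain ⟨v, hvon, hvspan⟩ := exists_orthonormal_superset hk1n
    (Submodule.span ℝ (Set.range y))
    (le_trans (finrank_range_le_card y) (by simp))
  refine ⟨v, hvon, ?_⟩
  -- the counted indices give small snoc-volume
  have hsubset : (Finset.univ.filter fun m : Fin N => Function.update f₀ i m ∈ S i) ⊆
      (Finset.univ.filter fun m : Fin N => gramVol (Fin.snoc v (u m)) ≤ ρ) := by
    intro m hm
    rw [Finset.mem_filter] at hm ⊢
    refine ⟨Finset.mem_univ _, ?_⟩
    have hm' : ‖gramSchmidt ℝ (u ∘ Function.update f₀ i m) i‖ < ρ := by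
      have := hm.2
      rw [hSdef] at this
      exact (Finset.mem_filter.mp this).2
    set w : Fin k → EuclideanSpace ℝ (Fin n) := u ∘ Function.update f₀ i m with hwdef
    have hq : w i - gramSchmidt ℝ w i ∈ Submodule.span ℝ (Set.range v) := by
      have h1 := gramSchmidt_diff_mem_span w i
      have himg : w '' Set.Iio i ⊆ Set.range y := by
        rintro _ ⟨l, hl, rfl⟩
        have hli : (l : ℕ) < (i : ℕ) := Fin.lt_def.mp hl
        have hlk : (l : ℕ) < k - 1 := by
          have := i.isLt; omega
        refine ⟨⟨l, hlk⟩, ?_⟩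
        simp only [hydef]
        rw [dif_pos hli]
        have hfin : (⟨(l : ℕ), lt_trans hli i.isLt⟩ : Fin k) = l := by ext; rfl
        rw [hfin, hwdef]
        show u (f₀ l) = u (Function.update f₀ i m l)
        rw [Function.update_of_ne (ne_of_lt hl)]
      exact hvspan ((Submodule.span_mono himg) h1)
    have hwi : w i = u m := by
      rw [hwdef]
      show u (Function.update f₀ i m i) = u m
      rw [Function.update_self]
    have hle := gramVol_snoc_le hvon (u m) (w i - gramSchmidt ℝ w i) hq
    calc gramVol (Fin.snoc v (u m)) ≤ ‖u m - (w i - gramSchmidt ℝ w i)‖ := hle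
      _ = ‖gramSchmidt ℝ w i‖ := by rw [← hwi]; congr 1; abel
      _ ≤ ρ := le_of_lt hm'
  -- final arithmetic
  have hcount : (count f₀ : ℝ) ≤
      ((Finset.univ.filter fun m : Fin N => gramVol (Fin.snoc v (u m)) ≤ ρ).card : ℝ) := by
    exact_mod_cast Finset.card_le_card hsubset
  have hpow : (2 * (k - 1) : ℕ) ≤ 2 ^ (2 * k) := by
    have h1 : k < 2 ^ k := Nat.lt_two_pow_self
    have h2 : 2 ^ (k + 1) ≤ 2 ^ (2 * k) := Nat.pow_le_pow_right (by norm_num) (by omega)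
    calc 2 * (k - 1) ≤ 2 * k := by omega
      _ ≤ 2 * 2 ^ k := by omega
      _ = 2 ^ (k + 1) := by ring
      _ ≤ 2 ^ (2 * k) := h2
  have hz : (2 : ℝ) ^ (-(2 * k : ℤ)) = 1 / (2 : ℝ) ^ (2 * k) := by
    rw [zpow_neg, one_div]
    congr 1
  have hNpos : (0:ℝ) < (N : ℝ) := by exact_mod_cast hN
  have hNk1 : (0:ℝ) < (N : ℝ) ^ (k - 1) := by positivity
  have e1 : (2 : ℝ) ^ (-(2 * k : ℤ)) * (N : ℝ) ≤ (N : ℝ) / (2 * ((k - 1 : ℕ) : ℝ)) := by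
    rw [hz]
    rw [div_mul_eq_mul_div, one_mul]
    apply div_le_div_of_nonneg_left (le_of_lt hNpos) (by positivity)
    calc (2 : ℝ) * ((k - 1 : ℕ) : ℝ) = ((2 * (k - 1) : ℕ) : ℝ) := by push_cast; ring
      _ ≤ ((2 ^ (2 * k) : ℕ) : ℝ) := by exact_mod_cast hpow
      _ = (2 : ℝ) ^ (2 * k) := by push_cast; ring
  have e2 : (N : ℝ) / (2 * ((k - 1 : ℕ) : ℝ)) ≤ ((S i).card : ℝ) / (N : ℝ) ^ (k - 1) := by
    have hNk : (N : ℝ) ^ k = (N : ℝ) ^ (k - 1) * (N : ℝ) := by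
      rw [← pow_succ]; congr 1; omega
    rw [div_le_div_iff₀ (by positivity) hNk1]
    calc (N : ℝ) * (N : ℝ) ^ (k - 1) = (N : ℝ) ^ k := by rw [hNk]; ring
      _ ≤ ((S i).card : ℝ) * (2 * ((k - 1 : ℕ) : ℝ)) := by
          rw [div_lt_iff₀ (by positivity)] at hSi
          linarith
  linarith [hf₀, hcount, e1, e2]
end

section
/- Let 2 ≤ k ≤ n and 0 < ρ ≤ 1. Let {τ} be a covering of the unit sphere S^{n-1} by spherical caps of diameter ρ such that each point of S^{n-1} is contained in at most 10^n caps. Then for every (k-1)-dimensional linear subspace H of R^n, the number of caps τ that intersect the set {u ∈ S^{n-1} : |H ∧ u| ≤ ρ} is at most C(n) ρ^{2-k} for a constant C(n) depending only on n. -/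
open Finset
open scoped Classical

open Metric MeasureTheory
open scoped ENNReal

lemma gramVol_snoc {n m : ℕ} {v : Fin m → EuclideanSpace ℝ (Fin n)} (hv : Orthonormal ℝ v)
    (x : EuclideanSpace ℝ (Fin n)) :
    gramVol (Fin.snoc v x) = ‖x - ∑ j, (inner ℝ (v j) x : ℝ) • v j‖ := by
  set a : Fin m → ℝ := fun j => (inner ℝ (v j) x : ℝ) with ha
  set s : EuclideanSpace ℝ (Fin n) := ∑ j, a j • v j with hs
  have hxs : (inner ℝ x s : ℝ) = ∑ j, a j * a j := by
    rw [hs, inner_sum]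
    refine Finset.sum_congr rfl fun j _ => ?_
    rw [real_inner_smul_right, real_inner_comm]
  have hss : (inner ℝ s s : ℝ) = ∑ j, a j * a j := by
    rw [hs, sum_inner]
    refine Finset.sum_congr rfl fun j _ => ?_
    rw [real_inner_smul_left, hv.inner_right_fintype a j]
  set w : Fin (m+1) → EuclideanSpace ℝ (Fin n) := Fin.snoc v x with hw
  have hdet : Matrix.det (Matrix.of fun i j : Fin (m+1) =>
      (inner ℝ (w i) (w j) : ℝ)) = (inner ℝ x x : ℝ) - ∑ j, a j * a j := by
    rw [← Matrix.det_submatrix_equiv_self (finSumFinEquiv (m := m) (n := 1))]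
    have : (Matrix.of fun i j : Fin (m+1) =>
        (inner ℝ (w i) (w j) : ℝ)).submatrix finSumFinEquiv finSumFinEquiv
        = Matrix.fromBlocks 1 (Matrix.of fun i (_ : Fin 1) => a i)
            (Matrix.of fun (_ : Fin 1) j => a j) (Matrix.of fun _ _ : Fin 1 => (inner ℝ x x : ℝ)) := by
      ext i j
      have hlast : (Fin.natAdd m (0 : Fin 1)) = Fin.last m := by ext; simp
      cases i with
      | inl i =>
        cases j with
        | inl j =>
          simp only [Matrix.submatrix_apply, finSumFinEquiv_apply_left, Matrix.of_apply]
          have : Fin.castAdd 1 i = Fin.castSucc i := rfl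
          rw [this]
          have : Fin.castAdd 1 j = Fin.castSucc j := rfl
          rw [hw, this, Fin.snoc_castSucc, Fin.snoc_castSucc]
          have := hv
          rw [orthonormal_iff_ite] at this
          simp [Matrix.fromBlocks, Matrix.one_apply, this i j]
        | inr j =>
          have hj : j = 0 := Subsingleton.elim _ _
          subst hj
          simp only [Matrix.submatrix_apply, finSumFinEquiv_apply_left,
            finSumFinEquiv_apply_right, Matrix.of_apply, hlast]
          have : Fin.castAdd 1 i = Fin.castSucc i := rfl
          rw [hw, this, Fin.snoc_castSucc, Fin.snoc_last]
          simp [Matrix.fromBlocks, ha]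
      | inr i =>
        have hi : i = 0 := Subsingleton.elim _ _
        subst hi
        cases j with
        | inl j =>
          simp only [Matrix.submatrix_apply, finSumFinEquiv_apply_left,
            finSumFinEquiv_apply_right, Matrix.of_apply, hlast]
          have : Fin.castAdd 1 j = Fin.castSucc j := rfl
          rw [hw, this, Fin.snoc_castSucc, Fin.snoc_last]
          simp [Matrix.fromBlocks, ha, mul_comm, real_inner_comm]
        | inr j =>
          have hj : j = 0 := Subsingleton.elim _ _
          subst hj
          simp only [Matrix.submatrix_apply, finSumFinEquiv_apply_right, Matrix.of_apply, hlast]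
          rw [hw, Fin.snoc_last]
          simp [Matrix.fromBlocks]
    rw [this, Matrix.det_fromBlocks_one₁₁]
    rw [Matrix.det_fin_one]
    simp [Matrix.mul_apply, mul_comm]
  have hnorm : (inner ℝ x x : ℝ) - ∑ j, a j * a j = ‖x - s‖ ^ 2 := by
    have : (inner ℝ (x - s) (x - s) : ℝ) = (inner ℝ x x : ℝ) - ∑ j, a j * a j := by
      have h2 : (inner ℝ s x : ℝ) = ∑ j, a j * a j := by rw [real_inner_comm]; exact hxs
      rw [inner_sub_sub_self, hxs, hss, h2]; ring
    rw [← this, real_inner_self_eq_norm_sq]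
  show Real.sqrt (Matrix.det (Matrix.of fun i j : Fin (m+1) => (inner ℝ (w i) (w j) : ℝ))) = _
  rw [hdet, hnorm, Real.sqrt_sq (norm_nonneg _)]

lemma exists_maximal_sep {α X : Type*} [PseudoMetricSpace X] (t : Finset α) (y : α → X) {δ : ℝ}
    (hδ : 0 < δ) :
    ∃ Q, Q ⊆ t ∧ (∀ i ∈ Q, ∀ j ∈ Q, i ≠ j → δ < dist (y i) (y j)) ∧
      ∀ i ∈ t, ∃ q ∈ Q, dist (y i) (y q) ≤ δ := by
  classical
  obtain ⟨Q, hQ𝒮, hQmax⟩ :=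
    (t.powerset.filter
      (fun s => ∀ i ∈ s, ∀ j ∈ s, i ≠ j → δ < dist (y i) (y j))).exists_max_image
      Finset.card ⟨∅, by simp⟩
  simp only [Finset.mem_filter, Finset.mem_powerset] at hQ𝒮
  refine ⟨Q, hQ𝒮.1, hQ𝒮.2, ?_⟩
  intro i hi
  by_contra hcon
  push_neg at hcon
  have hiQ : i ∉ Q := by
    intro h
    have := hcon i h
    simp at this
    exact absurd this (not_lt.2 hδ.le)
  have hins : insert i Q ∈ t.powerset.filter
      (fun s => ∀ i ∈ s, ∀ j ∈ s, i ≠ j → δ < dist (y i) (y j)) := by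
    simp only [Finset.mem_filter, Finset.mem_powerset]
    refine ⟨Finset.insert_subset hi hQ𝒮.1, ?_⟩
    intro a ha b hb hab
    rcases Finset.mem_insert.1 ha with rfl | ha'
    · rcases Finset.mem_insert.1 hb with rfl | hb'
      · exact absurd rfl hab
      · exact hcon b hb'
    · rcases Finset.mem_insert.1 hb with rfl | hb'
      · rw [dist_comm]; exact hcon a ha'
      · exact hQ𝒮.2 a ha' b hb' hab
  have := hQmax _ hins
  rw [Finset.card_insert_of_notMem hiQ] at this
  omega

lemma pack_lemma {d : ℕ} {α : Type*} (t : Finset α) (y : α → EuclideanSpace ℝ (Fin d)) {r : ℝ}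
    (hr : 0 < r)
    (sep : ∀ i ∈ t, ∀ j ∈ t, i ≠ j → 2 * r ≤ dist (y i) (y j))
    (S : Set (EuclideanSpace ℝ (Fin d)))
    (hsub : ∀ i ∈ t, Metric.ball (y i) r ⊆ S)
    {V : ℝ} (hV : 0 ≤ V)
    (hS : volume S ≤ ENNReal.ofReal V * volume (Metric.ball (0 : EuclideanSpace ℝ (Fin d)) 1)) :
    (t.card : ℝ) * r ^ d ≤ V := by
  classical
  set B := volume (Metric.ball (0 : EuclideanSpace ℝ (Fin d)) 1) with hB
  have hB0 : B ≠ 0 := (measure_ball_pos _ _ one_pos).ne'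
  have hBt : B ≠ ⊤ := measure_ball_lt_top.ne
  have hdisj : (↑t : Set α).PairwiseDisjoint (fun i => Metric.ball (y i) r) := by
    intro i hi j hj hij
    exact Metric.ball_disjoint_ball (by linarith [sep i hi j hj hij])
  have hsum : ∑ i ∈ t, volume (Metric.ball (y i) r) = volume (⋃ i ∈ t, Metric.ball (y i) r) :=
    (measure_biUnion_finset hdisj fun i _ => measurableSet_ball).symm
  have hball : ∀ i : α, volume (Metric.ball (y i) r) = ENNReal.ofReal (r ^ d) * B := by
    intro i
    rw [hB, Measure.addHaar_ball_of_pos volume (y i) hr, finrank_euclideanSpace_fin]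
  have hunion : volume (⋃ i ∈ t, Metric.ball (y i) r) ≤ ENNReal.ofReal V * B := by
    refine le_trans (measure_mono ?_) hS
    exact Set.iUnion₂_subset fun i hi => hsub i hi
  have hkey : (t.card : ℝ≥0∞) * (ENNReal.ofReal (r ^ d) * B) ≤ ENNReal.ofReal V * B := by
    calc (t.card : ℝ≥0∞) * (ENNReal.ofReal (r ^ d) * B)
        = ∑ _i ∈ t, ENNReal.ofReal (r ^ d) * B := by rw [Finset.sum_const, nsmul_eq_mul]
      _ = ∑ i ∈ t, volume (Metric.ball (y i) r) := by
          exact Finset.sum_congr rfl fun i _ => (hball i).symm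
      _ ≤ ENNReal.ofReal V * B := hsum ▸ hunion
  rw [← mul_assoc] at hkey
  have hkey2 : (t.card : ℝ≥0∞) * ENNReal.ofReal (r ^ d) ≤ ENNReal.ofReal V :=
    (ENNReal.mul_le_mul_iff_left hB0 hBt).1 hkey
  have : ENNReal.ofReal ((t.card : ℝ) * r ^ d) ≤ ENNReal.ofReal V := by
    rw [ENNReal.ofReal_mul (by positivity)]
    rw [ENNReal.ofReal_natCast]
    exact hkey2
  exact (ENNReal.ofReal_le_ofReal_iff hV).1 this

lemma annulus_vol {d : ℕ} (hd : 0 < d) {t : ℝ} (ht0 : 0 ≤ t) (ht1 : t ≤ 1) :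
    volume (Metric.closedBall (0 : EuclideanSpace ℝ (Fin d)) (1 + t) \
        Metric.ball (0 : EuclideanSpace ℝ (Fin d)) (1 - t)) =
      ENNReal.ofReal ((1 + t) ^ d - (1 - t) ^ d) *
        volume (Metric.ball (0 : EuclideanSpace ℝ (Fin d)) 1) := by
  haveI : Nonempty (Fin d) := ⟨⟨0, hd⟩⟩
  have hsub : Metric.ball (0 : EuclideanSpace ℝ (Fin d)) (1 - t) ⊆
      Metric.closedBall (0 : EuclideanSpace ℝ (Fin d)) (1 + t) :=
    (Metric.ball_subset_closedBall).trans (Metric.closedBall_subset_closedBall (by linarith))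
  rw [measure_diff hsub measurableSet_ball.nullMeasurableSet measure_ball_lt_top.ne]
  rw [Measure.addHaar_closedBall volume _ (by linarith : (0:ℝ) ≤ 1 + t),
    Measure.addHaar_ball volume _ (by linarith : (0:ℝ) ≤ 1 - t), finrank_euclideanSpace_fin]
  rw [← ENNReal.sub_mul (fun _ _ => measure_ball_lt_top.ne)]
  rw [ENNReal.ofReal_sub _ (pow_nonneg (by linarith) d)]

lemma geom_bound (m : ℕ) {u : ℝ} (hu0 : 0 ≤ u) (hu1 : u ≤ 1) :
    (1 + u) ^ m - (1 - u) ^ m ≤ m * 2 ^ (m + 1) * u := by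
  have h := geom_sum₂_mul (1 + u) (1 - u) m
  rw [← h, show (1 + u) - (1 - u) = 2 * u by ring]
  have hsum : (∑ i ∈ Finset.range m, (1 + u) ^ i * (1 - u) ^ (m - 1 - i)) ≤ m * 2 ^ m := by
    calc (∑ i ∈ Finset.range m, (1 + u) ^ i * (1 - u) ^ (m - 1 - i))
        ≤ ∑ _i ∈ Finset.range m, (2 : ℝ) ^ m := by
          refine Finset.sum_le_sum fun i hi => ?_
          have h1 : (1 + u) ^ i ≤ 2 ^ m := by
            calc (1 + u) ^ i ≤ 2 ^ i :=
                  pow_le_pow_left₀ (by linarith) (by linarith) i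
              _ ≤ 2 ^ m := pow_le_pow_right₀ one_le_two (Finset.mem_range.1 hi).le
          have h2 : (1 - u) ^ (m - 1 - i) ≤ 1 := pow_le_one₀ (by linarith) (by linarith)
          calc (1 + u) ^ i * (1 - u) ^ (m - 1 - i) ≤ (1 + u) ^ i * 1 :=
                mul_le_mul_of_nonneg_left h2 (by positivity)
            _ = (1 + u) ^ i := mul_one _
            _ ≤ 2 ^ m := h1
      _ = m * 2 ^ m := by rw [Finset.sum_const, Finset.card_range, nsmul_eq_mul]
  have h2u : (0:ℝ) ≤ 2 * u := by linarith
  calc (∑ i ∈ Finset.range m, (1 + u) ^ i * (1 - u) ^ (m - 1 - i)) * (2 * u)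
      ≤ (m * 2 ^ m) * (2 * u) := mul_le_mul_of_nonneg_right hsum h2u
    _ = m * 2 ^ (m + 1) * u := by ring

lemma norm_ortho_sum {n m : ℕ} {v : Fin m → EuclideanSpace ℝ (Fin n)} (hv : Orthonormal ℝ v)
    (z : EuclideanSpace ℝ (Fin m)) : ‖∑ j, z j • v j‖ = ‖z‖ := by
  have hss : (inner ℝ (∑ j, z j • v j) (∑ j, z j • v j) : ℝ) = ∑ j, z j * z j := by
    rw [sum_inner]
    refine Finset.sum_congr rfl fun j _ => ?_
    rw [real_inner_smul_left, hv.inner_right_fintype z j]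
  have h1 : ‖∑ j, z j • v j‖ ^ 2 = ∑ j, z j * z j := by
    rw [← hss, real_inner_self_eq_norm_sq]
  have h2 : ‖z‖ ^ 2 = ∑ j, z j * z j := by
    rw [EuclideanSpace.norm_eq, Real.sq_sqrt (by positivity)]
    exact Finset.sum_congr rfl fun j _ => by
      rw [Real.norm_eq_abs, sq_abs, sq]
  have := h1.trans h2.symm
  have hn1 : (0:ℝ) ≤ ‖∑ j, z j • v j‖ := norm_nonneg _
  have hn2 : (0:ℝ) ≤ ‖z‖ := norm_nonneg _
  nlinarith

lemma sphere_net {m : ℕ} (hm : 0 < m) {ρ : ℝ} (hρ : 0 < ρ) (hρ1 : ρ ≤ 1) :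
    ∃ Q : Finset (EuclideanSpace ℝ (Fin m)), (∀ q ∈ Q, ‖q‖ = 1) ∧
      ((Q.card : ℝ) * (ρ/4) ^ m ≤ (1 + ρ/4) ^ m - (1 - ρ/4) ^ m) ∧
      ∀ u : EuclideanSpace ℝ (Fin m), ‖u‖ = 1 → ∃ q ∈ Q, ‖u - q‖ ≤ ρ := by
  classical
  haveI : Nonempty (Fin m) := ⟨⟨0, hm⟩⟩
  have hcomp : IsCompact (Metric.sphere (0 : EuclideanSpace ℝ (Fin m)) 1) := isCompact_sphere _ _
  obtain ⟨s, hs_sub, hs_fin, hs_cov⟩ := hcomp.elim_finite_subcover_image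
    (b := Metric.sphere (0 : EuclideanSpace ℝ (Fin m)) 1)
    (c := fun u => Metric.ball u (ρ/2)) (fun u _ => isOpen_ball)
    (fun u hu => Set.mem_biUnion hu (Metric.mem_ball_self (by linarith)))
  obtain ⟨Q, hQt, hsep, hnet⟩ := exists_maximal_sep hs_fin.toFinset
    (id : EuclideanSpace ℝ (Fin m) → EuclideanSpace ℝ (Fin m)) (δ := ρ/2) (by linarith)
  have hQs : ∀ q ∈ Q, ‖q‖ = 1 := by
    intro q hq
    have := hs_sub (hs_fin.mem_toFinset.1 (hQt hq))
    rwa [mem_sphere_zero_iff_norm] at this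
  refine ⟨Q, hQs, ?_, ?_⟩
  · refine pack_lemma Q id (r := ρ/4) (by linarith) ?_
      (Metric.closedBall (0 : EuclideanSpace ℝ (Fin m)) (1 + ρ/4) \
        Metric.ball (0 : EuclideanSpace ℝ (Fin m)) (1 - ρ/4)) ?_ ?_ ?_
    · intro i hi j hj hij
      have := hsep i hi j hj hij
      simp only [id] at this ⊢
      linarith
    · intro q hq z hz
      rw [Metric.mem_ball] at hz
      have hq1 : ‖q‖ = 1 := hQs q hq
      simp only [id] at hz
      have hzq : ‖z - q‖ < ρ/4 := by rwa [← dist_eq_norm]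
      constructor
      · rw [Metric.mem_closedBall, dist_zero_right]
        have h4 : ‖z‖ ≤ ‖z - q‖ + ‖q‖ := by
          have := norm_add_le (z - q) q; simpa using this
        rw [hq1] at h4; linarith
      · rw [Metric.mem_ball, dist_zero_right]
        intro hcon
        have h5 : ‖q‖ ≤ ‖q - z‖ + ‖z‖ := by
          have := norm_add_le (q - z) z; simpa using this
        rw [hq1, norm_sub_rev] at h5
        linarith
    · have : (1 - ρ/4 : ℝ) ^ m ≤ (1 + ρ/4) ^ m :=
        pow_le_pow_left₀ (by linarith) (by linarith) m
      linarith
    · exact le_of_eq (annulus_vol hm (by linarith) (by linarith))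
  · intro u hu
    have hu' : u ∈ Metric.sphere (0 : EuclideanSpace ℝ (Fin m)) 1 := by
      rwa [mem_sphere_zero_iff_norm]
    obtain ⟨p, hp, hup⟩ := Set.mem_iUnion₂.1 (hs_cov hu')
    obtain ⟨q, hq, hpq⟩ := hnet p (hs_fin.mem_toFinset.2 hp)
    refine ⟨q, hq, ?_⟩
    simp only [id] at hpq
    rw [← dist_eq_norm]
    calc dist u q ≤ dist u p + dist p q := dist_triangle _ _ _
      _ ≤ ρ/2 + ρ/2 := add_le_add (le_of_lt (Metric.mem_ball.1 hup)) hpq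
      _ = ρ := by ring

set_option maxHeartbeats 1000000 in
/-- If `{τ}` is a covering of `S^{n-1}` by spherical caps of diameter `ρ` with overlap at
most `10^n` (caps are indexed by `ι`, the cap with center `c i` being
`{u : ‖u‖ = 1, ‖u - c i‖ ≤ ρ/2}`), and `H` is a `(k-1)`-dimensional subspace (given by an
orthonormal basis `v`), then at most `C(n) ρ^{2-k}` caps meet `{u ∈ S^{n-1} : |H ∧ u| ≤ ρ}`. -/
theorem stmt_4 (n : ℕ) :
    ∃ C : ℝ, 0 < C ∧
      ∀ (k : ℕ), 2 ≤ k → k ≤ n → ∀ ρ : ℝ, 0 < ρ → ρ ≤ 1 →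
      ∀ (ι : Type) [Fintype ι] (c : ι → EuclideanSpace ℝ (Fin n)),
        (∀ i, ‖c i‖ = 1) →
        (∀ x : EuclideanSpace ℝ (Fin n), ‖x‖ = 1 → ∃ i, ‖x - c i‖ ≤ ρ / 2) →
        (∀ x : EuclideanSpace ℝ (Fin n), ‖x‖ = 1 →
          ((Finset.univ.filter fun i : ι => ‖x - c i‖ ≤ ρ / 2).card : ℝ) ≤ 10 ^ n) →
        ∀ v : Fin (k - 1) → EuclideanSpace ℝ (Fin n), Orthonormal ℝ v →
          ((Finset.univ.filter fun i : ι =>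
              ∃ x : EuclideanSpace ℝ (Fin n), ‖x‖ = 1 ∧ ‖x - c i‖ ≤ ρ / 2 ∧
                gramVol (Fin.snoc v x) ≤ ρ).card : ℝ) ≤ C * ρ ^ ((2 : ℝ) - k) := by
  classical
  refine ⟨n * 2400 ^ n + 1, by positivity, ?_⟩
  intro k hk2 hkn ρ hρ hρ1 ι _ c hc hcover hoverlap v hv
  set F := (Finset.univ.filter fun i : ι =>
      ∃ x : EuclideanSpace ℝ (Fin n), ‖x‖ = 1 ∧ ‖x - c i‖ ≤ ρ / 2 ∧
        gramVol (Fin.snoc v x) ≤ ρ) with hF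
  obtain ⟨Q, hQunit, hQcard, hQnet⟩ := sphere_net (m := k - 1) (by omega) hρ hρ1
  set L : EuclideanSpace ℝ (Fin (k-1)) → EuclideanSpace ℝ (Fin n) :=
    fun z => ∑ j, z j • v j with hL
  have hLnorm : ∀ z, ‖L z‖ = ‖z‖ := fun z => norm_ortho_sum hv z
  have hLsub : ∀ z w, L z - L w = L (z - w) := by
    intro z w
    simp only [hL]
    rw [← Finset.sum_sub_distrib]
    exact Finset.sum_congr rfl fun j _ => by rw [← sub_smul]; rfl
  have key : ∀ i ∈ F, ∃ q ∈ Q, ‖c i - L q‖ ≤ ρ/2 + 2*ρ + ρ := by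
    intro i hi
    rw [hF, Finset.mem_filter] at hi
    obtain ⟨x, hx1, hxc, hg⟩ := hi.2
    rw [gramVol_snoc hv x] at hg
    set a : EuclideanSpace ℝ (Fin (k-1)) := WithLp.toLp 2 (fun j => (inner ℝ (v j) x : ℝ)) with ha
    have hga : ‖x - L a‖ ≤ ρ := hg
    obtain ⟨uh, huh1, hxu⟩ : ∃ uh : EuclideanSpace ℝ (Fin (k-1)), ‖uh‖ = 1 ∧
        ‖x - L uh‖ ≤ 2*ρ := by
      by_cases hA : a = 0
      · have hLa0 : L a = 0 := by
          rw [hA]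
          simp [hL]
        rw [hLa0, sub_zero, hx1] at hga
        have hρe : ρ = 1 := le_antisymm hρ1 hga
        refine ⟨EuclideanSpace.single ⟨0, by omega⟩ 1, by simp, ?_⟩
        have ht : ‖x - L (EuclideanSpace.single ⟨0, by omega⟩ 1)‖ ≤
            ‖x‖ + ‖L (EuclideanSpace.single ⟨0, by omega⟩ 1)‖ := norm_sub_le _ _
        rw [hx1, hLnorm] at ht
        simp at ht
        rw [hρe]
        linarith
      · have hA0 : ‖a‖ ≠ 0 := norm_ne_zero_iff.2 hA
        have hA0' : (0:ℝ) < ‖a‖ := norm_pos_iff.2 hA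
        refine ⟨‖a‖⁻¹ • a, ?_, ?_⟩
        · rw [norm_smul, norm_inv, norm_norm, inv_mul_cancel₀ hA0]
        · have h6 : |‖a‖ - 1| ≤ ρ := by
            have h7 := abs_norm_sub_norm_le (L a) x
            rw [hLnorm, hx1, norm_sub_rev] at h7
            linarith
          have h8 : ‖L a - L (‖a‖⁻¹ • a)‖ = |‖a‖ - 1| := by
            rw [hLsub, hLnorm]
            have : a - ‖a‖⁻¹ • a = (1 - ‖a‖⁻¹) • a := by rw [sub_smul, one_smul]
            rw [this, norm_smul, Real.norm_eq_abs]
            rw [← abs_of_nonneg (norm_nonneg a), ← abs_mul]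
            congr 1
            field_simp
            rw [abs_norm]; ring
          calc ‖x - L (‖a‖⁻¹ • a)‖ ≤ ‖x - L a‖ + ‖L a - L (‖a‖⁻¹ • a)‖ := by
                have := dist_triangle x (L a) (L (‖a‖⁻¹ • a))
                simpa [dist_eq_norm] using this
            _ ≤ ρ + ρ := add_le_add hga (h8 ▸ h6)
            _ = 2*ρ := by ring
    obtain ⟨q, hq, huq⟩ := hQnet uh huh1
    refine ⟨q, hq, ?_⟩
    have h9 : ‖L uh - L q‖ ≤ ρ := by rw [hLsub, hLnorm]; exact huq
    have h10 : ‖c i - x‖ ≤ ρ/2 := by rwa [norm_sub_rev]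
    calc ‖c i - L q‖ ≤ ‖c i - x‖ + ‖x - L q‖ := by
          have := dist_triangle (c i) x (L q); simpa [dist_eq_norm] using this
      _ ≤ ‖c i - x‖ + (‖x - L uh‖ + ‖L uh - L q‖) := by
          have := dist_triangle x (L uh) (L q)
          simp only [dist_eq_norm] at this
          linarith
      _ ≤ ρ/2 + 2*ρ + ρ := by linarith
  obtain ⟨P, hPF, hPsep, hPnet⟩ := exists_maximal_sep F c (δ := ρ/2) (by linarith)
  -- Step D : F.card ≤ P.card * 10^n
  have hFP : (F.card : ℝ) ≤ (P.card : ℝ) * 10 ^ n := by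
    have hsub : F ⊆ P.biUnion (fun p => Finset.univ.filter fun i => ‖c p - c i‖ ≤ ρ/2) := by
      intro i hi
      obtain ⟨p, hp, hdist⟩ := hPnet i hi
      rw [Finset.mem_biUnion]
      refine ⟨p, hp, ?_⟩
      rw [Finset.mem_filter]
      refine ⟨Finset.mem_univ _, ?_⟩
      rw [dist_eq_norm, norm_sub_rev] at hdist
      exact hdist
    have h1 := Finset.card_le_card hsub
    have h2 := Finset.card_biUnion_le (s := P)
      (t := fun p => Finset.univ.filter fun i => ‖c p - c i‖ ≤ ρ/2)
    have h3 : ((P.biUnion (fun p => Finset.univ.filter fun i => ‖c p - c i‖ ≤ ρ/2)).card : ℝ)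
        ≤ ∑ p ∈ P, ((Finset.univ.filter fun i => ‖c p - c i‖ ≤ ρ/2).card : ℝ) := by
      exact_mod_cast h2
    calc (F.card : ℝ) ≤ _ := by exact_mod_cast h1
      _ ≤ ∑ p ∈ P, ((Finset.univ.filter fun i => ‖c p - c i‖ ≤ ρ/2).card : ℝ) := h3
      _ ≤ ∑ _p ∈ P, (10:ℝ)^n := Finset.sum_le_sum fun p _ => hoverlap (c p) (hc p)
      _ = (P.card : ℝ) * 10^n := by rw [Finset.sum_const, nsmul_eq_mul]
  -- Step E : P.card ≤ Q.card * 15^n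
  have hPQ : (P.card : ℝ) ≤ (Q.card : ℝ) * 15 ^ n := by
    set φ : ι → EuclideanSpace ℝ (Fin (k-1)) :=
      fun p => if h : ∃ q ∈ Q, ‖c p - L q‖ ≤ ρ/2 + 2*ρ + ρ then h.choose else 0 with hφ
    have hφQ : ∀ p ∈ P, φ p ∈ Q ∧ ‖c p - L (φ p)‖ ≤ ρ/2 + 2*ρ + ρ := by
      intro p hp
      have h := key p (hPF hp)
      obtain ⟨q, hqQ, hqle⟩ := h
      have hex : ∃ q ∈ Q, ‖c p - L q‖ ≤ ρ/2 + 2*ρ + ρ := ⟨q, hqQ, hqle⟩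
      simp only [hφ, dif_pos hex]
      exact ⟨hex.choose_spec.1, hex.choose_spec.2⟩
    have hfib := Finset.card_eq_sum_card_fiberwise (f := φ) (s := P) (t := Q)
      (fun p hp => (hφQ p hp).1)
    have hfibb : ∀ q ∈ Q, ((P.filter fun p => φ p = q).card : ℝ) ≤ 15 ^ n := by
      intro q hq
      have hpack := pack_lemma (P.filter fun p => φ p = q) c (r := ρ/4) (by linarith)
        (fun i hi j hj hij => by
          have := hPsep i (Finset.mem_of_mem_filter i hi) j (Finset.mem_of_mem_filter j hj) hij
          linarith)
        (Metric.ball (L q) (15*ρ/4))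
        (fun p hp z hz => by
          rw [Finset.mem_filter] at hp
          have hple : ‖c p - L q‖ ≤ ρ/2 + 2*ρ + ρ := hp.2 ▸ (hφQ p hp.1).2
          rw [Metric.mem_ball] at hz ⊢
          calc dist z (L q) ≤ dist z (c p) + dist (c p) (L q) := dist_triangle _ _ _
            _ < ρ/4 + (ρ/2 + 2*ρ + ρ) := by
                rw [dist_eq_norm]
                exact add_lt_add_of_lt_of_le hz hple
            _ ≤ 15*ρ/4 := by linarith)
        (V := (15*ρ/4)^n) (by positivity)
        (le_of_eq (by
          rw [Measure.addHaar_ball_of_pos volume (L q) (by linarith : (0:ℝ) < 15*ρ/4),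
            finrank_euclideanSpace_fin]))
      have hpow : ((15:ℝ)*ρ/4)^n = 15^n * (ρ/4)^n := by
        rw [← mul_pow]; congr 1; ring
      rw [hpow] at hpack
      exact le_of_mul_le_mul_right hpack (by positivity)
    calc (P.card : ℝ) = ∑ q ∈ Q, ((P.filter fun p => φ p = q).card : ℝ) := by
          rw [hfib]; push_cast; rfl
      _ ≤ ∑ _q ∈ Q, (15:ℝ)^n := Finset.sum_le_sum hfibb
      _ = (Q.card : ℝ) * 15^n := by rw [Finset.sum_const, nsmul_eq_mul]
  -- Step F : numerics
  have hQb : (Q.card : ℝ) * (ρ/4)^(k-1) ≤ (k-1 : ℕ) * 2^((k-1)+1) * (ρ/4) :=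
    hQcard.trans (geom_bound (k-1) (by linarith) (by linarith))
  have h4 : (Q.card : ℝ) * ρ^(k-1) ≤ ((k-1:ℕ) * 2^((k-1)+1) * (ρ/4)) * 4^(k-1) := by
    have hmul := mul_le_mul_of_nonneg_right hQb (by positivity : (0:ℝ) ≤ 4^(k-1))
    calc (Q.card : ℝ) * ρ^(k-1) = (Q.card : ℝ) * (ρ/4)^(k-1) * 4^(k-1) := by
          rw [mul_assoc, ← mul_pow]
          congr 2
          field_simp
      _ ≤ _ := hmul
  have hrpow : ρ ^ ((2:ℝ) - k) = ρ * ρ / ρ^k := by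
    rw [Real.rpow_sub hρ, Real.rpow_natCast, show ((2:ℝ)) = ((2:ℕ):ℝ) by norm_num,
      Real.rpow_natCast]
    rw [sq]
  have hkpow : ρ^k = ρ^(k-1) * ρ := by
    conv_lhs => rw [show k = (k-1) + 1 by omega]
    rw [pow_succ]
  rw [hrpow, hkpow]
  have hdd : ρ * ρ / (ρ^(k-1) * ρ) = ρ / ρ^(k-1) := by
    rw [mul_comm (ρ^(k-1)) ρ, ← div_div, mul_div_assoc, div_self (ne_of_gt hρ), mul_one]
  rw [hdd]
  rw [← mul_div_assoc, le_div_iff₀ (by positivity : (0:ℝ) < ρ^(k-1))]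
  -- goal : F.card * ρ^(k-1) ≤ (n*2400^n+1) * ρ
  have hchain : (F.card : ℝ) * ρ^(k-1) ≤
      (((k-1:ℕ) * 2^((k-1)+1) * (ρ/4)) * 4^(k-1)) * (15^n * 10^n) := by
    calc (F.card : ℝ) * ρ^(k-1) ≤ ((P.card : ℝ) * 10^n) * ρ^(k-1) := by
          exact mul_le_mul_of_nonneg_right hFP (by positivity)
      _ ≤ (((Q.card : ℝ) * 15^n) * 10^n) * ρ^(k-1) := by
          have : (P.card : ℝ) * 10^n ≤ ((Q.card : ℝ) * 15^n) * 10^n :=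
            mul_le_mul_of_nonneg_right hPQ (by positivity)
          exact mul_le_mul_of_nonneg_right this (by positivity)
      _ = ((Q.card : ℝ) * ρ^(k-1)) * (15^n * 10^n) := by ring
      _ ≤ (((k-1:ℕ) * 2^((k-1)+1) * (ρ/4)) * 4^(k-1)) * (15^n * 10^n) :=
          mul_le_mul_of_nonneg_right h4 (by positivity)
  refine hchain.trans ?_
  -- numeric : ((k-1) * 2^k * (ρ/4)) * 4^(k-1) * (15^n*10^n) ≤ (n*2400^n+1)*ρ
  have hc1 : ((k-1:ℕ):ℝ) ≤ (n:ℝ) := by exact_mod_cast Nat.le_of_lt_succ (by omega)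
  have hc2 : (2:ℝ)^((k-1)+1) ≤ 2^(n+1) := pow_le_pow_right₀ one_le_two (by omega)
  have hc3 : (4:ℝ)^(k-1) ≤ 4^n := pow_le_pow_right₀ (by norm_num) (by omega)
  have h1200 : (2:ℝ)^n * 4^n * (15^n * 10^n) = 1200^n := by
    rw [← mul_pow, ← mul_pow, ← mul_pow]; norm_num
  have hc4 : ((k-1:ℕ):ℝ) * 2^((k-1)+1) * 4^(k-1) * (15^n * 10^n) ≤
      (n:ℝ) * 2^(n+1) * 4^n * (15^n * 10^n) := by
    have p1 : (0:ℝ) ≤ 2^((k-1)+1) := by positivity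
    have p2 : (0:ℝ) ≤ 4^(k-1) := by positivity
    have p3 : (0:ℝ) ≤ (15:ℝ)^n * 10^n := by positivity
    have p4 : (0:ℝ) ≤ (n:ℝ) := Nat.cast_nonneg n
    have p5 : (0:ℝ) ≤ (2:ℝ)^(n+1) := by positivity
    gcongr
  have hc5 : (n:ℝ) * 2^(n+1) * 4^n * (15^n * 10^n) ≤ (n:ℝ) * 2400^n * 4 := by
    have h1200' : (1200:ℝ)^n = 2^n * 4^n * (15^n * 10^n) := by
      rw [show (1200:ℝ) = 2*4*(15*10) by norm_num, mul_pow, mul_pow, mul_pow]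
    have e : (n:ℝ) * 2^(n+1) * 4^n * (15^n * 10^n) = (n:ℝ) * 1200^n * 2 := by
      rw [h1200']; ring
    rw [e]
    have h24 : (1200:ℝ)^n ≤ 2400^n := pow_le_pow_left₀ (by norm_num) (by norm_num) n
    have hn0 : (0:ℝ) ≤ (n:ℝ) := Nat.cast_nonneg n
    nlinarith [pow_nonneg (by norm_num : (0:ℝ) ≤ 1200) n]
  calc (((k-1:ℕ):ℝ) * 2^((k-1)+1) * (ρ/4)) * 4^(k-1) * (15^n * 10^n)
      = (((k-1:ℕ):ℝ) * 2^((k-1)+1) * 4^(k-1) * (15^n * 10^n)) * (ρ/4) := by ring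
    _ ≤ ((n:ℝ) * 2^(n+1) * 4^n * (15^n * 10^n)) * (ρ/4) :=
        mul_le_mul_of_nonneg_right hc4 (by positivity)
    _ ≤ ((n:ℝ) * 2400^n * 4) * (ρ/4) := mul_le_mul_of_nonneg_right hc5 (by positivity)
    _ = (n:ℝ) * 2400^n * ρ := by ring
    _ ≤ ((n:ℝ) * 2400^n + 1) * ρ := by nlinarith
end
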